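/- Let α_L, α_R be polynomial functions ℝ → ℝ of degree at most 1 with α_S(v) > 0 for all v ∈ [0,1], and let β_L, β_R be polynomial functions of degree at most 1. Then there exist bilinear maps F_L, F_R : ℝ² → ℝ² (each component of the form c₀₀ + c₁₀u + c₀₁v + c₁₁uv) such that F_L(0,v) = F_R(0,v) = (0,v) for all v, such that det[∂_u F_S(0,v), ∂_v F_S(0,v)] ≠ 0 for all v ∈ [0,1] and S ∈ {L,R}, and such that for all v ∈ [0,1]: α_R(v)·∂_u F_L(0,v) − α_L(v)·∂_u F_R(0,v) + (α_L(v)·β_R(v) − α_R(v)·β_L(v))·(0,1) = 0. (This is the second part of Proposition 4.1: any prescribed linear, positive α's and linear β's are realized by bilinear two-patch parametrizations.) -/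

import Mathlib

/-- `det[a,b] := a₁b₂ − a₂b₁` for vectors `a, b` in ℝ². -/
def det2 (a b : Fin 2 → ℝ) : ℝ := a 0 * b 1 - a 1 * b 0

lemma hd2 (p q r s : ℝ) (x : ℝ) :
    HasDerivAt (fun u : ℝ => (![p + u * q, r + u * s] : Fin 2 → ℝ)) ![q, s] x := by
  rw [hasDerivAt_pi]
  intro i
  fin_cases i <;> simp <;>
    exact hasDerivAt_mul_const _

lemma dFu (α β : ℝ → ℝ) (v : ℝ) :
    deriv (fun u : ℝ => (![u * α v, v + u * β v] : Fin 2 → ℝ)) 0 = ![α v, β v] := by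
  have h := hd2 0 (α v) v (β v) 0
  simp only [zero_add] at h
  simpa using h.deriv

lemma dFv (v : ℝ) :
    deriv (fun w : ℝ => (![(0:ℝ), w] : Fin 2 → ℝ)) v = ![0, 1] := by
  have h := hd2 0 0 0 1 v
  simp only [zero_add, mul_zero, add_zero, mul_one] at h
  simpa using h.deriv

/-- Second part of Proposition 4.1: any prescribed linear, positive α's and linear β's are
realized by bilinear two-patch parametrizations `F_L, F_R` with common interface
`F_S(0,v) = (0,v)`, nonsingular along the interface, satisfying the G¹ gluing relation. -/
theorem stmt9 (αL αR βL βR : ℝ → ℝ)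
    (hαL : ∃ a b : ℝ, ∀ v, αL v = a + b * v)
    (hαR : ∃ a b : ℝ, ∀ v, αR v = a + b * v)
    (hβL : ∃ a b : ℝ, ∀ v, βL v = a + b * v)
    (hβR : ∃ a b : ℝ, ∀ v, βR v = a + b * v)
    (hposL : ∀ v ∈ Set.Icc (0 : ℝ) 1, 0 < αL v)
    (hposR : ∀ v ∈ Set.Icc (0 : ℝ) 1, 0 < αR v) :
    ∃ FL FR : ℝ → ℝ → (Fin 2 → ℝ),
      (∃ c00 c10 c01 c11 : Fin 2 → ℝ,
        ∀ u v : ℝ, FL u v = c00 + u • c10 + v • c01 + (u * v) • c11) ∧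
      (∃ c00 c10 c01 c11 : Fin 2 → ℝ,
        ∀ u v : ℝ, FR u v = c00 + u • c10 + v • c01 + (u * v) • c11) ∧
      (∀ v : ℝ, FL 0 v = ![0, v] ∧ FR 0 v = ![0, v]) ∧
      (∀ v ∈ Set.Icc (0 : ℝ) 1,
        det2 (deriv (fun u => FL u v) 0) (deriv (fun w => FL 0 w) v) ≠ 0 ∧
        det2 (deriv (fun u => FR u v) 0) (deriv (fun w => FR 0 w) v) ≠ 0 ∧
        αR v • deriv (fun u => FL u v) 0 - αL v • deriv (fun u => FR u v) 0
          + (αL v * βR v - αR v * βL v) • (![0, 1] : Fin 2 → ℝ) = 0) := by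
  obtain ⟨a1, b1, h1⟩ := hαL
  obtain ⟨a2, b2, h2⟩ := hαR
  obtain ⟨a3, b3, h3⟩ := hβL
  obtain ⟨a4, b4, h4⟩ := hβR
  refine ⟨fun u v => ![u * αL v, v + u * βL v], fun u v => ![u * αR v, v + u * βR v],
    ⟨![0,0], ![a1,a3], ![0,1], ![b1,b3], ?_⟩, ⟨![0,0], ![a2,a4], ![0,1], ![b2,b4], ?_⟩, ?_, ?_⟩
  · intro u v
    funext i
    fin_cases i <;> simp [h1, h3] <;> ring
  · intro u v
    funext i
    fin_cases i <;> simp [h2, h4] <;> ring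
  · intro v
    constructor <;> (funext i; fin_cases i <;> simp)
  · intro v hv
    have eL : (fun w => (![(0:ℝ) * αL w, w + 0 * βL w] : Fin 2 → ℝ))
        = fun w => (![(0:ℝ), w] : Fin 2 → ℝ) := by
      funext w i; fin_cases i <;> simp
    have eR : (fun w => (![(0:ℝ) * αR w, w + 0 * βR w] : Fin 2 → ℝ))
        = fun w => (![(0:ℝ), w] : Fin 2 → ℝ) := by
      funext w i; fin_cases i <;> simp
    rw [dFu αL βL v, dFu αR βR v, eL, eR, dFv]
    refine ⟨?_, ?_, ?_⟩
    · simp [det2]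
      exact (hposL v hv).ne'
    · simp [det2]
      exact (hposR v hv).ne'
    · funext i
      fin_cases i <;> simp <;> ring
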